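/- Let D ⊆ Nodes be a set of failed nodes, and suppose the set of zones z in which D contains at least f+1 nodes (i.e., |D_z| ≥ f+1, where D_z = {x ∈ D : x.1 = z}) has cardinality at most F. Then there exists a phase-1 quorum q1 ∈ Q1 with q1 ∩ D = ∅; that is, WPaxos can form a valid phase-1 quorum despite up to F failed zones and up to f crashed nodes in every other zone. -/

import Mathlib

/-- A node lives in one of `Z` zones, each zone having `2f+1` nodes. -/
abbrev Node (f Z : ℕ) := Fin Z × Fin (2 * f + 1)

/-- The part of a set of nodes `q` lying in zone `z`. -/
def zpart (f Z : ℕ) (q : Finset (Node f Z)) (z : Fin Z) : Finset (Node f Z) :=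
  q.filter (fun x => x.1 = z)

/-- WPaxos phase-1 quorums: `Z - F` zones, `f+1` nodes in each touched zone. -/
def Q1 (f F Z : ℕ) : Set (Finset (Node f Z)) :=
  {q | (q.image Prod.fst).card = Z - F ∧
       ∀ z : Fin Z, (zpart f Z q z).Nonempty → (zpart f Z q z).card = f + 1}

/-- WPaxos phase-2 quorums: `F + 1` zones, `f+1` nodes in each touched zone. -/
def Q2 (f F Z : ℕ) : Set (Finset (Node f Z)) :=
  {q | (q.image Prod.fst).card = F + 1 ∧
       ∀ z : Fin Z, (zpart f Z q z).Nonempty → (zpart f Z q z).card = f + 1}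

/-- If at most `F` zones contain `f+1` or more failed nodes, then some
phase-1 quorum avoids all failed nodes. -/
theorem wpaxos_q1_fault_tolerance (f F Z : ℕ) (hFZ : F < Z)
    (D : Finset (Node f Z))
    (hD : (Finset.univ.filter
        (fun z : Fin Z => f + 1 ≤ (zpart f Z D z).card)).card ≤ F) :
    ∃ q1 ∈ Q1 f F Z, q1 ∩ D = ∅ := by
  classical
  set Good : Finset (Fin Z) :=
    Finset.univ.filter (fun z => (zpart f Z D z).card ≤ f) with hGoodDef
  have hsplit :
      Good.card + (Finset.univ.filter
        (fun z : Fin Z => f + 1 ≤ (zpart f Z D z).card)).card = Z := by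
    have := Finset.card_filter_add_card_filter_not
      (s := (Finset.univ : Finset (Fin Z)))
      (p := fun z => (zpart f Z D z).card ≤ f)
    simp only [not_le, Nat.lt_iff_add_one_le] at this
    simpa using this
  have hGoodCard : Z - F ≤ Good.card := by omega
  obtain ⟨S, hSsub, hScard⟩ := Finset.exists_subset_card_eq (s := Good) (n := Z - F) hGoodCard
  -- B z : failed node indices in zone z
  set B : Fin Z → Finset (Fin (2 * f + 1)) :=
    fun z => (zpart f Z D z).image Prod.snd with hB
  have hBcard : ∀ z ∈ S, (B z).card ≤ f := by
    intro z hz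
    have hzG : z ∈ Good := hSsub hz
    have : (B z).card ≤ (zpart f Z D z).card := Finset.card_image_le
    rw [hGoodDef, Finset.mem_filter] at hzG
    omega
  have hcompl : ∀ z ∈ S, f + 1 ≤ ((B z)ᶜ).card := by
    intro z hz
    have := hBcard z hz
    have hc : ((B z)ᶜ).card = (2 * f + 1) - (B z).card := by
      rw [Finset.card_compl]; simp
    omega
  have hex : ∀ z : Fin Z, ∃ t : Finset (Fin (2 * f + 1)),
      z ∈ S → t ⊆ (B z)ᶜ ∧ t.card = f + 1 := by
    intro z
    by_cases hz : z ∈ S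
    · obtain ⟨t, ht, htc⟩ := Finset.exists_subset_card_eq (s := (B z)ᶜ) (n := f + 1) (hcompl z hz)
      exact ⟨t, fun _ => ⟨ht, htc⟩⟩
    · exact ⟨∅, fun h => absurd h hz⟩
  choose T hT using hex
  set q1 : Finset (Node f Z) :=
    S.biUnion (fun z => (T z).image (fun n => (z, n))) with hq1
  have hzpart : ∀ z : Fin Z, zpart f Z q1 z =
      if z ∈ S then (T z).image (fun n => (z, n)) else ∅ := by
    intro z
    ext ⟨a, b⟩
    simp only [zpart, Finset.mem_filter, hq1, Finset.mem_biUnion, Finset.mem_image,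
      Prod.mk.injEq]
    by_cases hz : z ∈ S <;> simp only [if_pos, if_neg, hz, Finset.mem_image,
      Finset.notMem_empty, Prod.mk.injEq] <;> aesop
  have hTne : ∀ z ∈ S, ((T z).image (fun n => ((z, n) : Node f Z))).Nonempty := by
    intro z hz
    rw [Finset.image_nonempty, ← Finset.card_pos, (hT z hz).2]
    omega
  refine ⟨q1, ⟨?_, ?_⟩, ?_⟩
  · have himg : q1.image Prod.fst = S := by
      ext z
      simp only [Finset.mem_image]
      constructor
      · rintro ⟨⟨z', n⟩, hx, rfl⟩
        simp only [hq1, Finset.mem_biUnion, Finset.mem_image] at hx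
        obtain ⟨w, hw, m, hm, heq⟩ := hx
        obtain ⟨rfl, rfl⟩ := Prod.mk.injEq .. ▸ heq
        exact hw
      · intro hz
        obtain ⟨x, hx⟩ := hTne z hz
        refine ⟨x, ?_, ?_⟩
        · simp only [hq1, Finset.mem_biUnion]; exact ⟨z, hz, hx⟩
        · simp only [Finset.mem_image] at hx
          obtain ⟨n, hn, rfl⟩ := hx; rfl
    rw [himg, hScard]
  · intro z hzne
    rw [hzpart z] at hzne ⊢
    by_cases hz : z ∈ S
    · simp only [if_pos hz]
      rw [Finset.card_image_of_injective _ (fun a b h => by simpa using h)]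
      exact (hT z hz).2
    · simp [hz] at hzne
  · rw [Finset.eq_empty_iff_forall_notMem]
    rintro ⟨z, n⟩ hx
    rw [Finset.mem_inter] at hx
    obtain ⟨hq, hd⟩ := hx
    simp only [hq1, Finset.mem_biUnion, Finset.mem_image] at hq
    obtain ⟨w, hw, m, hm, heq⟩ := hq
    cases heq
    have hsub := (hT z hw).1 hm
    rw [Finset.mem_compl] at hsub
    apply hsub
    rw [hB]
    exact Finset.mem_image.mpr ⟨(z, n), by simp [zpart, hd], rfl⟩
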